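/- arXiv:1606.09065 — 2 statements merged into one kernel-verified Lean document; each statement's English description precedes it below -/
import Mathlib

section
/- Let S be an incomplete n×n matrix with k unspecified entries, K a positive integer, and M(S,K) the (2k+n)×(2k+n) matrix that agrees with S on specified entries, and for each unspecified entry e=(i,j) contains a disjoint 3×3 submatrix K·P(1) (with P(α)=[[α,1,1],[1,1,0],[1,0,1]]) on rows/columns {i, e^1, e^2} and {j, e^1, e^2}, with all other entries 0. If S admits a completion C with PSD rank(C) ≤ 3 and all entries of C bounded in absolute value by K, then PSD rank(M(S,K)) ≤ 2k + 3. -/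
open Matrix

noncomputable def PsdRank {α β : Type} [Fintype α] [Fintype β] (A : Matrix α β ℝ) : ℕ :=
  sInf {k : ℕ | ∃ (B : α → Matrix (Fin k) (Fin k) ℝ) (C : β → Matrix (Fin k) (Fin k) ℝ),
    (∀ i, (B i).PosSemidef) ∧ (∀ j, (C j).PosSemidef) ∧ ∀ i j, A i j = ((B i) * (C j)).trace}

/-- The set of unspecified entries of an incomplete matrix
(entries in `Option ℝ`, with `none` denoting `⊛`). -/
def Unspec {n : ℕ} (S : Matrix (Fin n) (Fin n) (Option ℝ)) : Type :=
  {p : Fin n × Fin n // (S p.1 p.2).isNone}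

instance {n : ℕ} (S : Matrix (Fin n) (Fin n) (Option ℝ)) : Fintype (Unspec S) :=
  Subtype.fintype _

instance {n : ℕ} (S : Matrix (Fin n) (Fin n) (Option ℝ)) : DecidableEq (Unspec S) :=
  Subtype.instDecidableEq

/-- The matrix `𝓜(S,K)`: it agrees with `S` on specified entries, and for each
unspecified entry `e = (i,j)` it carries the gadget `K·P(1)`,
`P(α) = [[α,1,1],[1,1,0],[1,0,1]]`, on rows `{i,e¹,e²}` and columns `{j,e¹,e²}`;
all remaining entries are `0`. -/
def GadgetM {n : ℕ} (S : Matrix (Fin n) (Fin n) (Option ℝ)) (K : ℝ) :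
    Matrix (Fin n ⊕ (Unspec S ⊕ Unspec S)) (Fin n ⊕ (Unspec S ⊕ Unspec S)) ℝ :=
  Matrix.of fun r c => match r, c with
    | .inl i, .inl j => (S i j).getD K
    | .inl i, .inr (.inl e) => if e.val.1 = i then K else 0
    | .inl i, .inr (.inr e) => if e.val.1 = i then K else 0
    | .inr (.inl e), .inl j => if e.val.2 = j then K else 0
    | .inr (.inr e), .inl j => if e.val.2 = j then K else 0
    | .inr (.inl e), .inr (.inl e') => if e = e' then K else 0
    | .inr (.inl _), .inr (.inr _) => 0
    | .inr (.inr _), .inr (.inl _) => 0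
    | .inr (.inr e), .inr (.inr e') => if e = e' then K else 0

def IsCompletion {n : ℕ} (S : Matrix (Fin n) (Fin n) (Option ℝ))
    (C : Matrix (Fin n) (Fin n) ℝ) : Prop :=
  ∀ i j a, S i j = some a → C i j = a

/- ### Auxiliary lemmas -/

lemma myPsdVecMulVec {m : Type} [Fintype m] (v : m → ℝ) : (vecMulVec v v).PosSemidef := by
  rw [vecMulVec_eq Unit]
  have h : (replicateCol Unit v)ᴴ = replicateRow Unit v := by ext i j; simp [replicateCol, replicateRow]
  rw [← h]
  exact posSemidef_self_mul_conjTranspose _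

lemma myPsdFromBlocks {l m : Type} [Fintype l] [Fintype m] {A : Matrix l l ℝ} {D : Matrix m m ℝ}
    (hA : A.PosSemidef) (hD : D.PosSemidef) : (fromBlocks A 0 0 D).PosSemidef := by
  rw [posSemidef_iff_dotProduct_mulVec]
  constructor
  · unfold Matrix.IsHermitian
    rw [fromBlocks_conjTranspose, hA.1, hD.1]
    simp
  · intro x
    have hx : x = Sum.elim (x ∘ Sum.inl) (x ∘ Sum.inr) := by ext y; cases y <;> rfl
    rw [hx, fromBlocks_mulVec]
    simp only [Matrix.zero_mulVec, add_zero, zero_add]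
    have : star (Sum.elim (x ∘ Sum.inl) (x ∘ Sum.inr)) =
        Sum.elim (star (x ∘ Sum.inl)) (star (x ∘ Sum.inr)) := by
      ext y; cases y <;> rfl
    rw [this, sumElim_dotProduct_sumElim]
    exact add_nonneg (hA.dotProduct_mulVec_nonneg _) (hD.dotProduct_mulVec_nonneg _)

lemma myTraceFromBlocks {l m : Type} [Fintype l] [Fintype m] (A : Matrix l l ℝ)
    (B : Matrix l m ℝ) (C : Matrix m l ℝ) (D : Matrix m m ℝ) :
    (fromBlocks A B C D).trace = A.trace + D.trace := by
  simp [Matrix.trace, Fintype.sum_sum_type, Matrix.diag]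

lemma myTraceFromBlocksMul {l m : Type} [Fintype l] [Fintype m] (A A' : Matrix l l ℝ)
    (D D' : Matrix m m ℝ) :
    (fromBlocks A 0 0 D * fromBlocks A' 0 0 D').trace = (A * A').trace + (D * D').trace := by
  rw [fromBlocks_multiply]
  simp [myTraceFromBlocks]

lemma myTraceVmvMul {m : Type} [Fintype m] (a b c d : m → ℝ) :
    (vecMulVec a b * vecMulVec c d).trace = (b ⬝ᵥ c) * (d ⬝ᵥ a) := by
  simp only [Matrix.trace, Matrix.diag, mul_apply, vecMulVec_apply]
  have hx : ∀ x, ∑ z, (a x * b z) * (c z * d x) = (b ⬝ᵥ c) * (d x * a x) := by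
    intro x; rw [dotProduct, Finset.sum_mul]
    apply Finset.sum_congr rfl; intros; ring
  simp_rw [hx]
  rw [← Finset.mul_sum]
  rfl

lemma myTraceVmvVmv {m : Type} [Fintype m] (a b : m → ℝ) :
    (vecMulVec a a * vecMulVec b b).trace = (a ⬝ᵥ b) ^ 2 := by
  rw [myTraceVmvMul, dotProduct_comm]; ring

def gv {η : Type} [DecidableEq η] (p q : ℝ) (e : η) : η ⊕ η → ℝ :=
  Sum.elim (fun a => if a = e then p else 0) (fun a => if a = e then q else 0)

lemma gv_dot {η : Type} [Fintype η] [DecidableEq η] (p q p' q' : ℝ) (e e' : η) :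
    gv p q e ⬝ᵥ gv p' q' e' = if e = e' then p * p' + q * q' else 0 := by
  have h : ∀ (r r' : ℝ), ∑ a : η, (if a = e then r else 0) * (if a = e' then r' else 0)
      = if e = e' then r * r' else 0 := by
    intro r r'
    by_cases h : e = e'
    · subst h
      rw [Finset.sum_eq_single e]
      · simp
      · intro a _ ha; simp [ha]
      · simp
    · rw [Finset.sum_eq_zero]
      · simp [h]
      · intro a _
        by_cases ha : a = e <;> simp [ha, h]
  simp only [gv, dotProduct, Fintype.sum_sum_type, Sum.elim_inl, Sum.elim_inr, h]
  split <;> ring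

lemma sum_ite_collapse {η : Type} [Fintype η] [DecidableEq η] (P : η → Prop) [DecidablePred P]
    (f : η → ℝ) (e' : η) :
    (∑ e, if P e then (if e = e' then f e else 0) else 0) = if P e' then f e' else 0 := by
  have h : ∀ e, (if P e then (if e = e' then f e else 0) else 0)
      = if e = e' then (if P e then f e else 0) else 0 := by
    intro e; by_cases h1 : e = e' <;> by_cases h2 : P e <;> simp [h1, h2]
  simp_rw [h]
  rw [Finset.sum_ite_eq' Finset.univ e' (fun e => if P e then f e else 0)]
  simp

lemma sum_ite_collapse' {η : Type} [Fintype η] [DecidableEq η] (P : η → Prop) [DecidablePred P]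
    (f : η → ℝ) (e' : η) :
    (∑ e, if P e then (if e' = e then f e else 0) else 0) = if P e' then f e' else 0 := by
  have h : ∀ e, (if P e then (if e' = e then f e else 0) else 0)
      = if e = e' then (if P e then f e else 0) else 0 := by
    intro e
    by_cases h1 : e = e'
    · subst h1; simp
    · have h1' : ¬ e' = e := fun h => h1 h.symm
      simp [h1, h1']
  simp_rw [h]
  rw [Finset.sum_ite_eq' Finset.univ e' (fun e => if P e then f e else 0)]
  simp

lemma psdRank_le_of_fact {α β γ : Type} [Fintype α] [Fintype β] [Fintype γ]
    (A : Matrix α β ℝ) (B : α → Matrix γ γ ℝ) (C : β → Matrix γ γ ℝ)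
    (hB : ∀ i, (B i).PosSemidef) (hC : ∀ j, (C j).PosSemidef)
    (h : ∀ i j, A i j = ((B i) * (C j)).trace) :
    PsdRank A ≤ Fintype.card γ := by
  apply Nat.sInf_le
  classical
  let e := Fintype.equivFin γ
  refine ⟨fun i => (B i).submatrix e.symm e.symm, fun j => (C j).submatrix e.symm e.symm,
    fun i => (hB i).submatrix _, fun j => (hC j).submatrix _, fun i j => ?_⟩
  rw [h i j, submatrix_mul_equiv]
  simp only [Matrix.trace, Matrix.diag, submatrix_apply]
  exact (Equiv.sum_comp e.symm _).symm

noncomputable def cc (K x : ℝ) : ℝ := (-1 - x / K) / 2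

noncomputable def ss (K x : ℝ) : ℝ := Real.sqrt (1 - (cc K x) ^ 2)

lemma cc_bounds (K x : ℝ) (hK : 0 < K) (h0 : 0 ≤ x) (h1 : x ≤ K) : (cc K x) ^ 2 ≤ 1 := by
  have h2 : 0 ≤ x / K := div_nonneg h0 hK.le
  have h3 : x / K ≤ 1 := (div_le_one hK).mpr h1
  unfold cc; nlinarith

lemma ss_sq (K x : ℝ) (hK : 0 < K) (h0 : 0 ≤ x) (h1 : x ≤ K) :
    ss K x * ss K x = 1 - (cc K x) ^ 2 :=
  Real.mul_self_sqrt (by linarith [cc_bounds K x hK h0 h1])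

lemma cc_hc (K x : ℝ) (hK : 0 < K) : 2 * K * cc K x = -K - x := by
  unfold cc; field_simp

/- ### Block matrices for the factorization -/

noncomputable def Bmat {n : ℕ} (S : Matrix (Fin n) (Fin n) (Option ℝ)) (m : ℕ)
    (B₀ : Fin n → Matrix (Fin m) (Fin m) ℝ) :
    (Fin n ⊕ (Unspec S ⊕ Unspec S)) →
      Matrix (Fin m ⊕ (Unspec S ⊕ Unspec S)) (Fin m ⊕ (Unspec S ⊕ Unspec S)) ℝ
  | .inl i => fromBlocks (B₀ i) 0 0
      (∑ e : Unspec S, if e.val.1 = i then vecMulVec (gv 1 1 e) (gv 1 1 e) else 0)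
  | .inr (.inl e) => fromBlocks 0 0 0 (vecMulVec (gv 1 0 e) (gv 1 0 e))
  | .inr (.inr e) => fromBlocks 0 0 0 (vecMulVec (gv 0 1 e) (gv 0 1 e))

noncomputable def Cmat {n : ℕ} (S : Matrix (Fin n) (Fin n) (Option ℝ)) (K : ℝ)
    (C : Matrix (Fin n) (Fin n) ℝ) (m : ℕ) (C₀ : Fin n → Matrix (Fin m) (Fin m) ℝ) :
    (Fin n ⊕ (Unspec S ⊕ Unspec S)) →
      Matrix (Fin m ⊕ (Unspec S ⊕ Unspec S)) (Fin m ⊕ (Unspec S ⊕ Unspec S)) ℝ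
  | .inl j => fromBlocks (C₀ j) 0 0
      (∑ e : Unspec S, if e.val.2 = j then
          vecMulVec (gv (Real.sqrt K) (Real.sqrt K * cc K (C e.val.1 e.val.2)) e)
            (gv (Real.sqrt K) (Real.sqrt K * cc K (C e.val.1 e.val.2)) e)
          + vecMulVec (gv 0 (Real.sqrt K * ss K (C e.val.1 e.val.2)) e)
            (gv 0 (Real.sqrt K * ss K (C e.val.1 e.val.2)) e)
        else 0)
  | .inr (.inl e) => fromBlocks 0 0 0 (vecMulVec (gv (Real.sqrt K) 0 e) (gv (Real.sqrt K) 0 e))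
  | .inr (.inr e) => fromBlocks 0 0 0 (vecMulVec (gv 0 (Real.sqrt K) e) (gv 0 (Real.sqrt K) e))

lemma psd_sum {η m : Type} [Fintype η] [Fintype m] (f : η → Matrix m m ℝ)
    (hf : ∀ e, (f e).PosSemidef) : (∑ e, f e).PosSemidef :=
  Finset.sum_induction f _ (fun _ _ ha hb => ha.add hb) Matrix.PosSemidef.zero fun e _ => hf e

theorem psdRank_gadget_of_completion {n : ℕ}
    (S : Matrix (Fin n) (Fin n) (Option ℝ)) (K : ℕ) (hK : 0 < K)
    (C : Matrix (Fin n) (Fin n) ℝ) (hC : IsCompletion S C)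
    (hCnonneg : ∀ i j, 0 ≤ C i j) (hCpsd : PsdRank C ≤ 3)
    (hCbd : ∀ i j, |C i j| ≤ (K : ℝ)) :
    PsdRank (GadgetM S (K : ℝ)) ≤ 2 * Fintype.card (Unspec S) + 3 := by
  classical
  have hKR : (0 : ℝ) < (K : ℝ) := by exact_mod_cast hK
  have hCle : ∀ i j, C i j ≤ (K : ℝ) := fun i j => (abs_le.mp (hCbd i j)).2
  -- the set defining `PsdRank C` is nonempty, so the infimum is attained
  have hmem : PsdRank C ∈ {k : ℕ | ∃ (B : Fin n → Matrix (Fin k) (Fin k) ℝ)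
      (C' : Fin n → Matrix (Fin k) (Fin k) ℝ),
      (∀ i, (B i).PosSemidef) ∧ (∀ j, (C' j).PosSemidef) ∧
        ∀ i j, C i j = ((B i) * (C' j)).trace} := by
    apply Nat.sInf_mem
    refine ⟨n, fun i => diagonal (fun t => C i t),
      fun j => diagonal (fun t => if t = j then 1 else 0), ?_, ?_, ?_⟩
    · exact fun i => posSemidef_diagonal_iff.mpr fun t => hCnonneg i t
    · exact fun j => posSemidef_diagonal_iff.mpr fun t => by positivity
    · intro i j
      rw [diagonal_mul_diagonal, trace_diagonal]
      have : ∀ t, C i t * (if t = j then (1 : ℝ) else 0) = if t = j then C i t else 0 := by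
        intro t; split <;> simp
      simp_rw [this]
      rw [Finset.sum_ite_eq' Finset.univ j (fun t => C i t)]
      simp
  have hmem' : ∃ m, m ≤ 3 ∧ ∃ (B₀ : Fin n → Matrix (Fin m) (Fin m) ℝ)
      (C₀ : Fin n → Matrix (Fin m) (Fin m) ℝ),
      (∀ i, (B₀ i).PosSemidef) ∧ (∀ j, (C₀ j).PosSemidef) ∧
        ∀ i j, C i j = ((B₀ i) * (C₀ j)).trace := ⟨PsdRank C, hCpsd, hmem⟩
  obtain ⟨m, hm3, B₀, C₀, hB₀, hC₀, hfac⟩ := hmem'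
  -- scalar facts
  have HS : Real.sqrt (K : ℝ) * Real.sqrt (K : ℝ) = (K : ℝ) := Real.mul_self_sqrt hKR.le
  have HSS : ∀ e : Unspec S, ss (K : ℝ) (C e.val.1 e.val.2) * ss (K : ℝ) (C e.val.1 e.val.2)
      = 1 - (cc (K : ℝ) (C e.val.1 e.val.2)) ^ 2 :=
    fun e => ss_sq _ _ hKR (hCnonneg _ _) (hCle _ _)
  have HC : ∀ e : Unspec S, 2 * (K : ℝ) * cc (K : ℝ) (C e.val.1 e.val.2)
      = -(K : ℝ) - C e.val.1 e.val.2 := fun e => cc_hc _ _ hKR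
  -- positive semidefiniteness of the factors
  have hBpsd : ∀ r, (Bmat S m B₀ r).PosSemidef := by
    rintro (i | e | e)
    · exact myPsdFromBlocks (hB₀ i) (psd_sum _ fun e => by
        split
        · exact myPsdVecMulVec _
        · exact Matrix.PosSemidef.zero)
    · exact myPsdFromBlocks Matrix.PosSemidef.zero (myPsdVecMulVec _)
    · exact myPsdFromBlocks Matrix.PosSemidef.zero (myPsdVecMulVec _)
  have hCpsd' : ∀ r, (Cmat S (K : ℝ) C m C₀ r).PosSemidef := by
    rintro (j | e | e)
    · exact myPsdFromBlocks (hC₀ j) (psd_sum _ fun e => by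
        split
        · exact (myPsdVecMulVec _).add (myPsdVecMulVec _)
        · exact Matrix.PosSemidef.zero)
    · exact myPsdFromBlocks Matrix.PosSemidef.zero (myPsdVecMulVec _)
    · exact myPsdFromBlocks Matrix.PosSemidef.zero (myPsdVecMulVec _)
  -- the entries match
  have hent : ∀ r c, GadgetM S (K : ℝ) r c = ((Bmat S m B₀ r) * (Cmat S (K : ℝ) C m C₀ c)).trace := by
    rintro (i | e | e) (j | e' | e')
    · -- (inl, inl)
      show (S i j).getD (K : ℝ) = _
      rw [Bmat, Cmat, myTraceFromBlocksMul, ← hfac i j]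
      have hD : ((∑ e : Unspec S, if e.val.1 = i then vecMulVec (gv 1 1 e) (gv 1 1 e) else 0) *
          (∑ e : Unspec S, if e.val.2 = j then
            vecMulVec (gv (Real.sqrt (K:ℝ)) (Real.sqrt (K:ℝ) * cc (K:ℝ) (C e.val.1 e.val.2)) e)
              (gv (Real.sqrt (K:ℝ)) (Real.sqrt (K:ℝ) * cc (K:ℝ) (C e.val.1 e.val.2)) e)
            + vecMulVec (gv 0 (Real.sqrt (K:ℝ) * ss (K:ℝ) (C e.val.1 e.val.2)) e)
              (gv 0 (Real.sqrt (K:ℝ) * ss (K:ℝ) (C e.val.1 e.val.2)) e) else 0)).trace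
          = ∑ e : Unspec S, if e.val.1 = i then
              (if e.val.2 = j then (K : ℝ) - C e.val.1 e.val.2 else 0) else 0 := by
        rw [Matrix.sum_mul, trace_sum]
        apply Finset.sum_congr rfl
        intro e _
        rw [ite_mul, Matrix.zero_mul, apply_ite Matrix.trace, trace_zero]
        by_cases h1 : e.val.1 = i
        · simp only [h1, if_true]
          rw [Matrix.mul_sum, trace_sum]
          have hterm : ∀ e' : Unspec S,
              (vecMulVec (gv 1 1 e) (gv 1 1 e) * (if e'.val.2 = j then
                vecMulVec (gv (Real.sqrt (K:ℝ)) (Real.sqrt (K:ℝ) * cc (K:ℝ) (C e'.val.1 e'.val.2)) e')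
                  (gv (Real.sqrt (K:ℝ)) (Real.sqrt (K:ℝ) * cc (K:ℝ) (C e'.val.1 e'.val.2)) e')
                + vecMulVec (gv 0 (Real.sqrt (K:ℝ) * ss (K:ℝ) (C e'.val.1 e'.val.2)) e')
                  (gv 0 (Real.sqrt (K:ℝ) * ss (K:ℝ) (C e'.val.1 e'.val.2)) e') else 0)).trace
              = if e'.val.2 = j then
                  (if e = e' then (K : ℝ) - C e'.val.1 e'.val.2 else 0) else 0 := by
            intro e'
            rw [mul_ite, Matrix.mul_zero, apply_ite Matrix.trace, trace_zero,
              Matrix.mul_add, trace_add, myTraceVmvVmv, myTraceVmvVmv, gv_dot, gv_dot]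
            congr 1
            by_cases h2 : e = e'
            · simp only [h2, if_true]
              rw [← h2]
              linear_combination ((1 + cc (K:ℝ) (C e.val.1 e.val.2)) ^ 2
                  + (ss (K:ℝ) (C e.val.1 e.val.2)) ^ 2) * HS
                + (K : ℝ) * HSS e + HC e
            · simp [h2]
          simp_rw [hterm]
          rw [sum_ite_collapse' (fun e' : Unspec S => e'.val.2 = j)
            (fun e' => (K : ℝ) - C e'.val.1 e'.val.2) e, h1]
        · simp [h1]
      rw [hD]
      rcases hS : S i j with _ | a
      · -- unspecified entry
        have hmem0 : (S i j).isNone := by rw [hS]; rfl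
        have hone : (∑ e : Unspec S, if e.val.1 = i then
            (if e.val.2 = j then (K : ℝ) - C e.val.1 e.val.2 else 0) else 0)
            = (K : ℝ) - C i j := by
          let e₀ : Unspec S := ⟨(i, j), hmem0⟩
          rw [Fintype.sum_eq_single e₀]
          · simp [e₀]
          · intro e he
            by_cases h1 : e.val.1 = i
            · by_cases h2 : e.val.2 = j
              · exact absurd (Subtype.ext (Prod.ext h1 h2)) he
              · simp [h1, h2]
            · simp [h1]
        rw [hone]
        simp only [Option.getD_none]
        ring
      · -- specified entry
        have hzero : ∀ e : Unspec S, (if e.val.1 = i then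
            (if e.val.2 = j then (K : ℝ) - C e.val.1 e.val.2 else 0) else 0) = 0 := by
          intro e
          by_cases h1 : e.val.1 = i
          · by_cases h2 : e.val.2 = j
            · exfalso
              have := e.property
              rw [h1, h2, hS] at this
              simp at this
            · simp [h1, h2]
          · simp [h1]
        rw [Finset.sum_eq_zero fun e _ => hzero e]
        simp [hC i j a hS]
    · -- (inl i, inr inl e')
      show (if e'.val.1 = i then (K:ℝ) else 0) = _
      rw [Bmat, Cmat, myTraceFromBlocksMul, Matrix.mul_zero, trace_zero,
        Matrix.sum_mul, trace_sum]
      have hterm : ∀ e : Unspec S,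
          ((if e.val.1 = i then vecMulVec (gv 1 1 e) (gv 1 1 e) else 0) *
            vecMulVec (gv (Real.sqrt (K:ℝ)) 0 e') (gv (Real.sqrt (K:ℝ)) 0 e')).trace
          = if e.val.1 = i then (if e = e' then (K : ℝ) else 0) else 0 := by
        intro e
        rw [ite_mul, Matrix.zero_mul, apply_ite Matrix.trace, trace_zero, myTraceVmvVmv, gv_dot]
        congr 1
        by_cases h2 : e = e'
        · simp only [h2, if_true]; linear_combination HS
        · simp [h2]
      simp_rw [hterm]
      rw [sum_ite_collapse (fun e : Unspec S => e.val.1 = i) (fun _ => (K : ℝ)) e']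
      simp
    · -- (inl i, inr inr e')
      show (if e'.val.1 = i then (K:ℝ) else 0) = _
      rw [Bmat, Cmat, myTraceFromBlocksMul, Matrix.mul_zero, trace_zero,
        Matrix.sum_mul, trace_sum]
      have hterm : ∀ e : Unspec S,
          ((if e.val.1 = i then vecMulVec (gv 1 1 e) (gv 1 1 e) else 0) *
            vecMulVec (gv 0 (Real.sqrt (K:ℝ)) e') (gv 0 (Real.sqrt (K:ℝ)) e')).trace
          = if e.val.1 = i then (if e = e' then (K : ℝ) else 0) else 0 := by
        intro e
        rw [ite_mul, Matrix.zero_mul, apply_ite Matrix.trace, trace_zero, myTraceVmvVmv, gv_dot]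
        congr 1
        by_cases h2 : e = e'
        · simp only [h2, if_true]; linear_combination HS
        · simp [h2]
      simp_rw [hterm]
      rw [sum_ite_collapse (fun e : Unspec S => e.val.1 = i) (fun _ => (K : ℝ)) e']
      simp
    · -- (inr inl e, inl j)
      show (if e.val.2 = j then (K:ℝ) else 0) = _
      rw [Bmat, Cmat, myTraceFromBlocksMul, Matrix.zero_mul, trace_zero,
        Matrix.mul_sum, trace_sum]
      have hterm : ∀ e' : Unspec S,
          (vecMulVec (gv 1 0 e) (gv 1 0 e) * (if e'.val.2 = j then
            vecMulVec (gv (Real.sqrt (K:ℝ)) (Real.sqrt (K:ℝ) * cc (K:ℝ) (C e'.val.1 e'.val.2)) e')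
              (gv (Real.sqrt (K:ℝ)) (Real.sqrt (K:ℝ) * cc (K:ℝ) (C e'.val.1 e'.val.2)) e')
            + vecMulVec (gv 0 (Real.sqrt (K:ℝ) * ss (K:ℝ) (C e'.val.1 e'.val.2)) e')
              (gv 0 (Real.sqrt (K:ℝ) * ss (K:ℝ) (C e'.val.1 e'.val.2)) e') else 0)).trace
          = if e'.val.2 = j then (if e = e' then (K : ℝ) else 0) else 0 := by
        intro e'
        rw [mul_ite, Matrix.mul_zero, apply_ite Matrix.trace, trace_zero,
          Matrix.mul_add, trace_add, myTraceVmvVmv, myTraceVmvVmv, gv_dot, gv_dot]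
        congr 1
        by_cases h2 : e = e'
        · simp only [h2, if_true]; linear_combination HS
        · simp [h2]
      simp_rw [hterm]
      rw [sum_ite_collapse' (fun e' : Unspec S => e'.val.2 = j) (fun _ => (K : ℝ)) e, zero_add]
    · -- (inr inl e, inr inl e')
      show (if e = e' then (K:ℝ) else 0) = _
      rw [Bmat, Cmat, myTraceFromBlocksMul, Matrix.zero_mul, trace_zero, zero_add,
        myTraceVmvVmv, gv_dot]
      by_cases h2 : e = e'
      · simp only [h2, if_true]; linear_combination -HS
      · simp [h2]
    · -- (inr inl e, inr inr e')
      show (0:ℝ) = _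
      rw [Bmat, Cmat, myTraceFromBlocksMul, Matrix.zero_mul, trace_zero, zero_add,
        myTraceVmvVmv, gv_dot]
      by_cases h2 : e = e'
      · simp [h2]
      · simp [h2]
    · -- (inr inr e, inl j)
      show (if e.val.2 = j then (K:ℝ) else 0) = _
      rw [Bmat, Cmat, myTraceFromBlocksMul, Matrix.zero_mul, trace_zero,
        Matrix.mul_sum, trace_sum]
      have hterm : ∀ e' : Unspec S,
          (vecMulVec (gv 0 1 e) (gv 0 1 e) * (if e'.val.2 = j then
            vecMulVec (gv (Real.sqrt (K:ℝ)) (Real.sqrt (K:ℝ) * cc (K:ℝ) (C e'.val.1 e'.val.2)) e')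
              (gv (Real.sqrt (K:ℝ)) (Real.sqrt (K:ℝ) * cc (K:ℝ) (C e'.val.1 e'.val.2)) e')
            + vecMulVec (gv 0 (Real.sqrt (K:ℝ) * ss (K:ℝ) (C e'.val.1 e'.val.2)) e')
              (gv 0 (Real.sqrt (K:ℝ) * ss (K:ℝ) (C e'.val.1 e'.val.2)) e') else 0)).trace
          = if e'.val.2 = j then (if e = e' then (K : ℝ) else 0) else 0 := by
        intro e'
        rw [mul_ite, Matrix.mul_zero, apply_ite Matrix.trace, trace_zero,
          Matrix.mul_add, trace_add, myTraceVmvVmv, myTraceVmvVmv, gv_dot, gv_dot]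
        congr 1
        by_cases h2 : e = e'
        · simp only [h2, if_true]
          rw [← h2]
          linear_combination ((cc (K:ℝ) (C e.val.1 e.val.2)) ^ 2
              + (ss (K:ℝ) (C e.val.1 e.val.2)) ^ 2) * HS + (K : ℝ) * HSS e
        · simp [h2]
      simp_rw [hterm]
      rw [sum_ite_collapse' (fun e' : Unspec S => e'.val.2 = j) (fun _ => (K : ℝ)) e, zero_add]
    · -- (inr inr e, inr inl e')
      show (0:ℝ) = _
      rw [Bmat, Cmat, myTraceFromBlocksMul, Matrix.zero_mul, trace_zero, zero_add,
        myTraceVmvVmv, gv_dot]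
      by_cases h2 : e = e'
      · simp [h2]
      · simp [h2]
    · -- (inr inr e, inr inr e')
      show (if e = e' then (K:ℝ) else 0) = _
      rw [Bmat, Cmat, myTraceFromBlocksMul, Matrix.zero_mul, trace_zero, zero_add,
        myTraceVmvVmv, gv_dot]
      by_cases h2 : e = e'
      · simp only [h2, if_true]; linear_combination -HS
      · simp [h2]
  have hle := psdRank_le_of_fact (GadgetM S (K : ℝ)) (Bmat S m B₀) (Cmat S (K : ℝ) C m C₀)
    hBpsd hCpsd' hent
  have hcard : Fintype.card (Fin m ⊕ (Unspec S ⊕ Unspec S))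
      = m + (Fintype.card (Unspec S) + Fintype.card (Unspec S)) := by
    simp [Fintype.card_sum]
  rw [hcard] at hle
  omega
end

section
/- Let S be an incomplete matrix with k unspecified entries and M(S,K) the associated block matrix as in the reduction. If PSD rank(M(S,K)) ≤ 2k + 3, then S admits a completion C with PSD rank(C) ≤ 3. -/
section PHsec
open Matrix

variable {m : Type} [Fintype m] [DecidableEq m]

lemma PH_vmv_mulVec (x y u : m → ℝ) : (vecMulVec x y) *ᵥ u = (y ⬝ᵥ u) • x := by
  ext i
  simp only [mulVec, dotProduct, vecMulVec_apply, Pi.smul_apply, smul_eq_mul, Finset.sum_mul]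
  exact Finset.sum_congr rfl fun j _ => by ring

lemma PH_mul_vmv (M : Matrix m m ℝ) (x y : m → ℝ) :
    M * vecMulVec x y = vecMulVec (M *ᵥ x) y := by
  ext i j
  simp only [mul_apply, vecMulVec_apply, mulVec, dotProduct, Finset.sum_mul]
  exact Finset.sum_congr rfl fun l _ => by ring

lemma PH_vmv_mul (M : Matrix m m ℝ) (x y : m → ℝ) :
    vecMulVec x y * M = vecMulVec x (Mᵀ *ᵥ y) := by
  ext i j
  simp only [mul_apply, vecMulVec_apply, mulVec, dotProduct, transpose_apply, Finset.mul_sum]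
  exact Finset.sum_congr rfl fun l _ => by ring

lemma PH_trace_vmv (x y : m → ℝ) : (vecMulVec x y).trace = x ⬝ᵥ y := by
  simp [Matrix.trace, Matrix.diag, vecMulVec_apply, dotProduct]

lemma PH_vmv_mul_vmv (x y z w : m → ℝ) :
    vecMulVec x y * vecMulVec z w = (y ⬝ᵥ z) • vecMulVec x w := by
  ext i j
  simp only [mul_apply, vecMulVec_apply, Matrix.smul_apply, smul_eq_mul, dotProduct, Finset.sum_mul]
  exact Finset.sum_congr rfl fun l _ => by ring

lemma PH_transpose_dot (M : Matrix m m ℝ) (x y : m → ℝ) :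
    x ⬝ᵥ (Mᵀ *ᵥ y) = (M *ᵥ x) ⬝ᵥ y := by
  rw [dotProduct_mulVec, vecMul_transpose]

lemma PH_symm_dot {M : Matrix m m ℝ} (hM : Mᵀ = M) (x y : m → ℝ) :
    (M *ᵥ x) ⬝ᵥ y = x ⬝ᵥ (M *ᵥ y) := by
  conv_rhs => rw [← hM]
  rw [PH_transpose_dot]

lemma PH_sum_mulVec {γ : Type*} (s : Finset γ) (f : γ → Matrix m m ℝ) (x : m → ℝ) :
    (∑ a ∈ s, f a) *ᵥ x = ∑ a ∈ s, (f a) *ᵥ x := by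
  ext i
  simp only [mulVec, dotProduct, Finset.sum_apply, Matrix.sum_apply, Finset.sum_mul]
  rw [Finset.sum_comm]

lemma PH_herm_transpose {A : Matrix m m ℝ} (hA : A.IsHermitian) : Aᵀ = A := by
  rw [← conjTranspose_eq_transpose_of_trivial]
  exact hA

noncomputable def Matrix.PosSemidef.sqrt {A : Matrix m m ℝ} (_hA : A.PosSemidef) :
    Matrix m m ℝ :=
  open scoped MatrixOrder in CFC.sqrt A

lemma Matrix.PosSemidef.sqrt_mul_self {A : Matrix m m ℝ} (hA : A.PosSemidef) :
    hA.sqrt * hA.sqrt = A := by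
  open scoped MatrixOrder in exact CFC.sqrt_mul_sqrt_self A hA.nonneg

lemma Matrix.PosSemidef.posSemidef_sqrt {A : Matrix m m ℝ} (hA : A.PosSemidef) :
    hA.sqrt.PosSemidef := by
  open scoped MatrixOrder in exact (CFC.sqrt_nonneg A).posSemidef

lemma PH_eq_ct_mul_self {A : Matrix m m ℝ} (hA : A.PosSemidef) : ∃ B : Matrix m m ℝ, A = Bᴴ * B :=
  ⟨hA.sqrt, by rw [hA.posSemidef_sqrt.1, hA.sqrt_mul_self]⟩

lemma PH_trace_nonneg_of_psd {A : Matrix m m ℝ} (hA : A.PosSemidef) : 0 ≤ A.trace := by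
  rw [Matrix.trace]
  apply Finset.sum_nonneg
  intro i _
  have h := hA.dotProduct_mulVec_nonneg (Pi.single i 1)
  simpa [single_dotProduct, mulVec_single, Matrix.diag] using h

lemma PH_trace_mul_psd_nonneg {A B : Matrix m m ℝ} (hA : A.PosSemidef) (hB : B.PosSemidef) :
    0 ≤ (A * B).trace := by
  have hRR : hB.sqrt * hB.sqrt = B := hB.sqrt_mul_self
  have hRh : hB.sqrtᴴ = hB.sqrt := hB.posSemidef_sqrt.1
  have h1 : (A * B).trace = (hB.sqrt * A * hB.sqrt).trace := by
    calc (A * B).trace = ((A * hB.sqrt) * hB.sqrt).trace := by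
          rw [Matrix.mul_assoc, hRR]
      _ = (hB.sqrt * (A * hB.sqrt)).trace := trace_mul_comm _ _
      _ = (hB.sqrt * A * hB.sqrt).trace := by rw [Matrix.mul_assoc]
  rw [h1]
  have hpsd : (hB.sqrtᴴ * A * hB.sqrt).PosSemidef := hA.conjTranspose_mul_mul_same _
  rw [hRh] at hpsd
  exact PH_trace_nonneg_of_psd hpsd

lemma PH_psd_eq_zero_of_trace_zero {A : Matrix m m ℝ} (hA : A.PosSemidef)
    (h : A.trace = 0) : A = 0 := by
  obtain ⟨B, rfl⟩ := PH_eq_ct_mul_self hA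
  have ht : (Bᴴ * B).trace = ∑ j, ∑ i, B i j * B i j := by
    simp [Matrix.trace, Matrix.diag, Matrix.mul_apply, Matrix.conjTranspose_apply]
  rw [ht] at h
  have hB : B = 0 := by
    ext i j
    have h1 := (Finset.sum_eq_zero_iff_of_nonneg
      (fun j _ => Finset.sum_nonneg fun i _ => mul_self_nonneg (B i j))).mp h j
      (Finset.mem_univ j)
    have h2 := (Finset.sum_eq_zero_iff_of_nonneg
      (fun i _ => mul_self_nonneg (B i j))).mp h1 i (Finset.mem_univ i)
    simpa using mul_self_eq_zero.mp h2
  rw [hB]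
  simp

lemma PH_psd_mul_eq_zero {A B : Matrix m m ℝ} (hA : A.PosSemidef) (hB : B.PosSemidef)
    (h : (A * B).trace = 0) : A * B = 0 := by
  have hRR : hB.sqrt * hB.sqrt = B := hB.sqrt_mul_self
  have hTT : hA.sqrt * hA.sqrt = A := hA.sqrt_mul_self
  have hRh : hB.sqrtᴴ = hB.sqrt := hB.posSemidef_sqrt.1
  have hTh : hA.sqrtᴴ = hA.sqrt := hA.posSemidef_sqrt.1
  set R := hB.sqrt
  set T := hA.sqrt
  have h1 : (R * A * R).trace = 0 := by
    rw [← h]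
    calc (R * A * R).trace = (R * (A * R)).trace := by rw [Matrix.mul_assoc]
      _ = ((A * R) * R).trace := trace_mul_comm _ _
      _ = (A * B).trace := by rw [Matrix.mul_assoc, hRR]
  have hpsd : (R * A * R).PosSemidef := by
    have := hA.conjTranspose_mul_mul_same R
    rwa [hRh] at this
  have h2 : (T * R)ᴴ * (T * R) = R * A * R := by
    rw [conjTranspose_mul, hRh, hTh, ← hTT]
    simp only [Matrix.mul_assoc]
  have h3 : T * R = 0 := by
    rw [← Matrix.conjTranspose_mul_self_eq_zero (A := T * R), h2]
    exact PH_psd_eq_zero_of_trace_zero hpsd h1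
  have h4 : A * B = T * ((T * R) * R) := by
    rw [← hTT, ← hRR]
    simp only [Matrix.mul_assoc]
  rw [h4, h3, Matrix.zero_mul, Matrix.mul_zero]

lemma PH_nonneg_entries_factorization {α : Type} [Fintype α] [DecidableEq α]
    (A : Matrix α α ℝ) (hA : ∀ i j, 0 ≤ A i j) :
    ∃ (B : α → Matrix (Fin (Fintype.card α)) (Fin (Fintype.card α)) ℝ)
      (C : α → Matrix (Fin (Fintype.card α)) (Fin (Fintype.card α)) ℝ),
    (∀ i, (B i).PosSemidef) ∧ (∀ j, (C j).PosSemidef) ∧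
      ∀ i j, A i j = ((B i) * (C j)).trace := by
  classical
  let e := Fintype.equivFin α
  refine ⟨fun i => diagonal (fun t => A i (e.symm t)),
    fun j => diagonal (fun t => if t = e j then 1 else 0), ?_, ?_, ?_⟩
  · intro i
    exact Matrix.posSemidef_diagonal_iff.mpr fun t => hA _ _
  · intro j
    exact Matrix.posSemidef_diagonal_iff.mpr fun t => by positivity
  · intro i j
    rw [diagonal_mul_diagonal, trace_diagonal]
    simp [mul_ite, Finset.sum_ite_eq']

lemma PH_exists_factor {d r : ℕ} (Q : Matrix (Fin d) (Fin d) ℝ)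
    (hQh : Q.IsHermitian) (hQ2 : Q * Q = Q) (htr : Q.trace ≤ (r : ℝ)) :
    ∃ F : Matrix (Fin d) (Fin r) ℝ, F * Fᴴ = Q := by
  classical
  set U : Matrix (Fin d) (Fin d) ℝ := (hQh.eigenvectorUnitary : Matrix (Fin d) (Fin d) ℝ)
    with hUdef
  set μ : Fin d → ℝ := hQh.eigenvalues with hμdef
  have hofreal : (RCLike.ofReal ∘ μ) = μ := by
    rw [RCLike.ofReal_real_eq_id]; rfl
  have hspec : Q = U * diagonal μ * star U := by
    have := hQh.spectral_theorem
    rwa [hofreal] at this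
  have hU1 : U * star U = 1 := by
    exact (Matrix.mem_unitaryGroup_iff).mp hQh.eigenvectorUnitary.2
  have hU2 : star U * U = 1 := by
    exact (Matrix.mem_unitaryGroup_iff').mp hQh.eigenvectorUnitary.2
  have hdiag : star U * Q * U = diagonal μ := by
    rw [hspec]; simp only [Matrix.mul_assoc]
    rw [hU2, Matrix.mul_one, ← Matrix.mul_assoc, hU2, Matrix.one_mul]
  -- eigenvalues are 0 or 1
  have hDD : diagonal μ * diagonal μ = diagonal μ := by
    rw [← hdiag]
    calc (star U * Q * U) * (star U * Q * U)
        = star U * (Q * (U * star U) * Q) * U := by simp only [Matrix.mul_assoc]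
      _ = star U * (Q * Q) * U := by rw [hU1, Matrix.mul_one]
      _ = star U * Q * U := by rw [hQ2, Matrix.mul_assoc]
  have hμ01 : ∀ t, μ t = 0 ∨ μ t = 1 := by
    intro t
    have h := congrFun (congrFun hDD t) t
    rw [diagonal_mul_diagonal] at h
    simp only [diagonal_apply_eq] at h
    rcases eq_or_ne (μ t) 0 with h0 | h0
    · exact Or.inl h0
    · exact Or.inr (by field_simp at h; nlinarith [h])
  set Tset : Finset (Fin d) := Finset.univ.filter (fun t => μ t = 1) with hTdef
  have htrsum : Q.trace = ∑ t, μ t := by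
    calc Q.trace = (U * diagonal μ * star U).trace := by rw [← hspec]
      _ = ((star U) * (U * diagonal μ)).trace := by rw [trace_mul_comm]
      _ = (diagonal μ).trace := by rw [← Matrix.mul_assoc, hU2, Matrix.one_mul]
      _ = ∑ t, μ t := trace_diagonal μ
  have hsum_card : ∑ t, μ t = (Tset.card : ℝ) := by
    have : ∀ t, μ t = (if μ t = 1 then (1:ℝ) else 0) := by
      intro t
      rcases hμ01 t with h | h <;> simp [h]
    rw [Finset.sum_congr rfl (fun t _ => this t), Finset.sum_boole, hTdef]
  have hcard : Tset.card ≤ r := by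
    rw [htrsum, hsum_card] at htr
    exact_mod_cast htr
  obtain ⟨g⟩ := Function.Embedding.nonempty_of_card_le (α := {t // t ∈ Tset}) (β := Fin r)
    (by simpa [Fintype.card_coe] using hcard)
  set sel : Matrix (Fin d) (Fin r) ℝ :=
    Matrix.of fun t s => if h : t ∈ Tset then (if g ⟨t, h⟩ = s then (1:ℝ) else 0) else 0
    with hseldef
  have hsel : sel * selᴴ = diagonal μ := by
    ext t t'
    simp only [mul_apply, conjTranspose_apply, hseldef, of_apply, star_trivial]
    by_cases ht : t ∈ Tset
    · by_cases ht' : t' ∈ Tset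
      · rcases eq_or_ne t t' with rfl | hne
        · have hμt : μ t = 1 := by
            have := Finset.mem_filter.mp (hTdef ▸ ht)
            exact this.2
          rw [diagonal_apply_eq, hμt]
          simp [dif_pos ht, mul_ite, Finset.sum_ite_eq]
        · rw [diagonal_apply_ne _ hne]
          apply Finset.sum_eq_zero; intro s _
          rw [dif_pos ht, dif_pos ht']
          by_cases h1 : g ⟨t, ht⟩ = s
          · by_cases h2 : g ⟨t', ht'⟩ = s
            · exact absurd (congrArg Subtype.val (g.injective (h1.trans h2.symm))) hne
            · simp [h2]
          · simp [h1]
      · have hz : diagonal μ t t' = 0 := by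
          rcases eq_or_ne t t' with rfl | hne
          · exact absurd ht ht'
          · exact diagonal_apply_ne _ hne
        rw [hz]
        apply Finset.sum_eq_zero; intro s _
        rw [dif_neg ht', mul_zero]
    · have hz : diagonal μ t t' = 0 := by
        rcases eq_or_ne t t' with rfl | hne
        · rw [diagonal_apply_eq]
          rcases hμ01 t with h | h
          · exact h
          · exact absurd (hTdef ▸ Finset.mem_filter.mpr ⟨Finset.mem_univ _, h⟩) ht
        · exact diagonal_apply_ne _ hne
      rw [hz]
      apply Finset.sum_eq_zero; intro s _
      rw [dif_neg ht, zero_mul]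
  refine ⟨U * sel, ?_⟩
  have : (U * sel) * (U * sel)ᴴ = U * (sel * selᴴ) * Uᴴ := by
    rw [conjTranspose_mul]
    simp only [Matrix.mul_assoc]
  rw [this, hsel, hspec, Matrix.star_eq_conjTranspose]

lemma PH_dotProduct_sum {m : Type} [Fintype m] {γ : Type*} (s : Finset γ)
    (x : m → ℝ) (f : γ → m → ℝ) :
    x ⬝ᵥ (∑ a ∈ s, f a) = ∑ a ∈ s, x ⬝ᵥ f a := by
  simp only [dotProduct, Finset.sum_apply, Finset.mul_sum]
  rw [Finset.sum_comm]

lemma PH_vmv_transpose {m : Type} [Fintype m] (x y : m → ℝ) :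
    (vecMulVec x y)ᵀ = vecMulVec y x := by
  ext i j
  simp [vecMulVec_apply, mul_comm]

end PHsec



open Matrix

set_option maxHeartbeats 1000000

private def prIdx {n : ℕ} {S : Matrix (Fin n) (Fin n) (Option ℝ)} :
    (Unspec S ⊕ Unspec S) → Fin n × Fin n :=
  Sum.elim Subtype.val Subtype.val

theorem completion_of_psdRank_gadget {n : ℕ}
    (S : Matrix (Fin n) (Fin n) (Option ℝ)) (K : ℕ) (hK : 0 < K)
    (hSnonneg : ∀ i j a, S i j = some a → (0 : ℝ) ≤ a)
    (hM : PsdRank (GadgetM S (K : ℝ)) ≤ 2 * Fintype.card (Unspec S) + 3) :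
    ∃ C : Matrix (Fin n) (Fin n) ℝ, IsCompletion S C ∧
      (∀ i j, 0 ≤ C i j) ∧ PsdRank C ≤ 3 := by
  classical
  set ι := (Fin n ⊕ (Unspec S ⊕ Unspec S)) with hidef
  have hKpos : (0:ℝ) < (K:ℝ) := by exact_mod_cast hK
  have hnn : ∀ r c, 0 ≤ GadgetM S (K:ℝ) r c := by
    rintro (i | (e | e)) (j | (f | f)) <;> simp only [GadgetM, Matrix.of_apply] <;>
      first
      | (split_ifs <;> positivity)
      | positivity
      | (rcases hS : S i j with _ | a
         · simp only [hS, Option.getD_none]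
           positivity
         · simp only [hS, Option.getD_some]
           exact hSnonneg _ _ _ hS)
  set PSet : Set ℕ := {k : ℕ | ∃ (B : ι → Matrix (Fin k) (Fin k) ℝ)
      (C : ι → Matrix (Fin k) (Fin k) ℝ),
    (∀ i, (B i).PosSemidef) ∧ (∀ j, (C j).PosSemidef) ∧
      ∀ i j, GadgetM S (K:ℝ) i j = ((B i) * (C j)).trace} with hPSet
  have hPR : PsdRank (GadgetM S (K:ℝ)) = sInf PSet := rfl
  have hPne : PSet.Nonempty := by
    obtain ⟨B, C, h1, h2, h3⟩ := PH_nonneg_entries_factorization (GadgetM S (K:ℝ)) hnn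
    exact ⟨Fintype.card ι, B, C, h1, h2, h3⟩
  have hmem : PsdRank (GadgetM S (K:ℝ)) ∈ PSet := by
    rw [hPR]; exact Nat.sInf_mem hPne
  set d := PsdRank (GadgetM S (K:ℝ)) with hddef
  obtain ⟨B, C, hBpsd, hCpsd, hfact⟩ := hmem
  have hdle : d ≤ 2 * Fintype.card (Unspec S) + 3 := hM
  -- entry facts
  have hBt : ∀ r, (B r)ᵀ = B r := fun r => PH_herm_transpose (hBpsd r).1
  have hCt : ∀ r, (C r)ᵀ = C r := fun r => PH_herm_transpose (hCpsd r).1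
  have hEdiagK : ∀ a : Unspec S ⊕ Unspec S,
      ((B (Sum.inr a)) * (C (Sum.inr a))).trace = (K:ℝ) := by
    rintro (e | e)
    · have h := hfact (Sum.inr (Sum.inl e)) (Sum.inr (Sum.inl e))
      simp only [GadgetM, Matrix.of_apply, if_pos rfl] at h
      exact h.symm
    · have h := hfact (Sum.inr (Sum.inr e)) (Sum.inr (Sum.inr e))
      simp only [GadgetM, Matrix.of_apply, if_pos rfl] at h
      exact h.symm
  have hEoff : ∀ a b : Unspec S ⊕ Unspec S, a ≠ b →
      (B (Sum.inr a)) * (C (Sum.inr b)) = 0 := by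
    rintro (e | e) (f | f) hne
    · refine PH_psd_mul_eq_zero (hBpsd _) (hCpsd _) ?_
      have hef : e ≠ f := by simpa using hne
      have h := hfact (Sum.inr (Sum.inl e)) (Sum.inr (Sum.inl f))
      simp only [GadgetM, Matrix.of_apply, if_neg hef] at h
      exact h.symm
    · refine PH_psd_mul_eq_zero (hBpsd _) (hCpsd _) ?_
      have h := hfact (Sum.inr (Sum.inl e)) (Sum.inr (Sum.inr f))
      simp only [GadgetM, Matrix.of_apply] at h
      exact h.symm
    · refine PH_psd_mul_eq_zero (hBpsd _) (hCpsd _) ?_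
      have h := hfact (Sum.inr (Sum.inr e)) (Sum.inr (Sum.inl f))
      simp only [GadgetM, Matrix.of_apply] at h
      exact h.symm
    · refine PH_psd_mul_eq_zero (hBpsd _) (hCpsd _) ?_
      have hef : e ≠ f := by simpa using hne
      have h := hfact (Sum.inr (Sum.inr e)) (Sum.inr (Sum.inr f))
      simp only [GadgetM, Matrix.of_apply, if_neg hef] at h
      exact h.symm
  have hrow0 : ∀ (i : Fin n) (a : Unspec S ⊕ Unspec S), (prIdx a).1 ≠ i →
      B (Sum.inl i) * C (Sum.inr a) = 0 := by
    rintro i (e | e) hne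
    · refine PH_psd_mul_eq_zero (hBpsd _) (hCpsd _) ?_
      have hne' : e.val.1 ≠ i := hne
      have h := hfact (Sum.inl i) (Sum.inr (Sum.inl e))
      simp only [GadgetM, Matrix.of_apply, if_neg hne'] at h
      exact h.symm
    · refine PH_psd_mul_eq_zero (hBpsd _) (hCpsd _) ?_
      have hne' : e.val.1 ≠ i := hne
      have h := hfact (Sum.inl i) (Sum.inr (Sum.inr e))
      simp only [GadgetM, Matrix.of_apply, if_neg hne'] at h
      exact h.symm
  have hcol0 : ∀ (j : Fin n) (a : Unspec S ⊕ Unspec S), (prIdx a).2 ≠ j →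
      B (Sum.inr a) * C (Sum.inl j) = 0 := by
    rintro j (e | e) hne
    · refine PH_psd_mul_eq_zero (hBpsd _) (hCpsd _) ?_
      have hne' : e.val.2 ≠ j := hne
      have h := hfact (Sum.inr (Sum.inl e)) (Sum.inl j)
      simp only [GadgetM, Matrix.of_apply, if_neg hne'] at h
      exact h.symm
    · refine PH_psd_mul_eq_zero (hBpsd _) (hCpsd _) ?_
      have hne' : e.val.2 ≠ j := hne
      have h := hfact (Sum.inr (Sum.inr e)) (Sum.inl j)
      simp only [GadgetM, Matrix.of_apply, if_neg hne'] at h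
      exact h.symm
  -- choose witness vectors
  have hzex : ∀ a : Unspec S ⊕ Unspec S, ∃ zz,
      0 < (C (Sum.inr a) *ᵥ (B (Sum.inr a) *ᵥ zz)) ⬝ᵥ (B (Sum.inr a) *ᵥ zz) := by
    intro a
    by_contra hcon
    push_neg at hcon
    have hzero : ∀ x, C (Sum.inr a) *ᵥ (B (Sum.inr a) *ᵥ x) = 0 := by
      intro x
      have hge : 0 ≤ (B (Sum.inr a) *ᵥ x) ⬝ᵥ (C (Sum.inr a) *ᵥ (B (Sum.inr a) *ᵥ x)) := by
        have h := (hCpsd (Sum.inr a)).dotProduct_mulVec_nonneg (B (Sum.inr a) *ᵥ x)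
        simpa using h
      have hle := hcon x
      have heq : (B (Sum.inr a) *ᵥ x) ⬝ᵥ (C (Sum.inr a) *ᵥ (B (Sum.inr a) *ᵥ x)) = 0 :=
        le_antisymm (by rwa [dotProduct_comm] at hle) hge
      exact ((hCpsd (Sum.inr a)).dotProduct_mulVec_zero_iff _).mp (by simpa using heq)
    have hCB : C (Sum.inr a) * B (Sum.inr a) = 0 := by
      ext p q
      have h := congrFun (hzero (Pi.single q 1)) p
      rw [mulVec_mulVec] at h
      simpa [mulVec_single] using h
    have htr0 : ((B (Sum.inr a)) * (C (Sum.inr a))).trace = 0 := by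
      rw [trace_mul_comm, hCB, trace_zero]
    rw [hEdiagK a] at htr0
    exact absurd htr0 (ne_of_gt hKpos)
  choose z hzpos using hzex
  set w : (Unspec S ⊕ Unspec S) → Fin d → ℝ := fun a => B (Sum.inr a) *ᵥ z a with hwdef
  set v : (Unspec S ⊕ Unspec S) → Fin d → ℝ := fun a => C (Sum.inr a) *ᵥ w a with hvdef
  set dd : (Unspec S ⊕ Unspec S) → ℝ := fun a => v a ⬝ᵥ w a with hdddef
  have hdpos : ∀ a, 0 < dd a := fun a => hzpos a
  have hdne : ∀ a, dd a ≠ 0 := fun a => (hdpos a).ne'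
  have horth : ∀ a b, a ≠ b → v a ⬝ᵥ w b = 0 := by
    intro a b hab
    have h1 : v a ⬝ᵥ w b = w a ⬝ᵥ (C (Sum.inr a) *ᵥ w b) := PH_symm_dot (hCt _) _ _
    have h2 : C (Sum.inr a) *ᵥ w b = 0 := by
      have hwb : w b = B (Sum.inr b) *ᵥ z b := rfl
      rw [hwb, mulVec_mulVec]
      have hBA : B (Sum.inr b) * C (Sum.inr a) = 0 := hEoff b a (Ne.symm hab)
      have hCB : C (Sum.inr a) * B (Sum.inr b) = 0 := by
        have h := congrArg Matrix.transpose hBA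
        rwa [transpose_mul, hCt, hBt, transpose_zero] at h
      rw [hCB, zero_mulVec]
    rw [h1, h2, dotProduct_zero]
  -- the positive definite congruence matrix
  set N : Matrix (Fin d) (Fin d) ℝ :=
    1 - ∑ a : Unspec S ⊕ Unspec S, (dd a)⁻¹ • vecMulVec (w a) (v a) with hNdef
  set Smat : Matrix (Fin d) (Fin d) ℝ :=
    (∑ a : Unspec S ⊕ Unspec S, (dd a)⁻¹ • vecMulVec (v a) (v a)) + Nᵀ * N with hSmatdef
  have hNw : ∀ b, N *ᵥ w b = 0 := by
    intro b
    rw [hNdef, sub_mulVec, one_mulVec, PH_sum_mulVec]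
    have h1 : ∀ a : Unspec S ⊕ Unspec S, ((dd a)⁻¹ • vecMulVec (w a) (v a)) *ᵥ w b
        = (if a = b then w a else 0) := by
      intro a
      rw [smul_mulVec, PH_vmv_mulVec]
      rcases eq_or_ne a b with rfl | hab
      · rw [if_pos rfl, smul_smul]
        have : v a ⬝ᵥ w a = dd a := rfl
        rw [this, inv_mul_cancel₀ (hdne a), one_smul]
      · rw [horth a b hab, if_neg hab]
        simp
    rw [Finset.sum_congr rfl (fun a _ => h1 a)]
    simp
  have hSw : ∀ b, Smat *ᵥ w b = v b := by
    intro b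
    rw [hSmatdef, add_mulVec, PH_sum_mulVec]
    have h2 : (Nᵀ * N) *ᵥ w b = 0 := by
      rw [← mulVec_mulVec, hNw, mulVec_zero]
    have h1 : ∀ a : Unspec S ⊕ Unspec S, ((dd a)⁻¹ • vecMulVec (v a) (v a)) *ᵥ w b
        = (if a = b then v a else 0) := by
      intro a
      rw [smul_mulVec, PH_vmv_mulVec]
      rcases eq_or_ne a b with rfl | hab
      · rw [if_pos rfl, smul_smul]
        have : v a ⬝ᵥ w a = dd a := rfl
        rw [this, inv_mul_cancel₀ (hdne a), one_smul]
      · rw [horth a b hab, if_neg hab]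
        simp
    rw [Finset.sum_congr rfl (fun a _ => h1 a), h2, add_zero]
    simp
  have hSherm : Smatᵀ = Smat := by
    rw [hSmatdef, transpose_add, transpose_sum, transpose_mul, transpose_transpose]
    congr 1
    refine Finset.sum_congr rfl fun a _ => ?_
    rw [transpose_smul, PH_vmv_transpose]
  have hquad : ∀ x : Fin d → ℝ, x ⬝ᵥ (Smat *ᵥ x) =
      (∑ a : Unspec S ⊕ Unspec S, (dd a)⁻¹ * (v a ⬝ᵥ x)^2) + (N *ᵥ x) ⬝ᵥ (N *ᵥ x) := by
    intro x
    rw [hSmatdef, add_mulVec, dotProduct_add, PH_sum_mulVec]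
    congr 1
    · rw [PH_dotProduct_sum]
      refine Finset.sum_congr rfl fun a _ => ?_
      rw [smul_mulVec, PH_vmv_mulVec, dotProduct_smul, dotProduct_smul, smul_eq_mul,
        smul_eq_mul, dotProduct_comm x (v a)]
      ring
    · rw [← mulVec_mulVec]
      exact PH_transpose_dot N x (N *ᵥ x)
  have hSpd : Smat.PosDef := by
    refine Matrix.posDef_iff_dotProduct_mulVec.mpr ⟨?_, ?_⟩
    · show Smatᴴ = Smat
      rw [conjTranspose_eq_transpose_of_trivial]
      exact hSherm
    · intro x hx
      have hsum0 : 0 ≤ ∑ a : Unspec S ⊕ Unspec S, (dd a)⁻¹ * (v a ⬝ᵥ x)^2 :=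
        Finset.sum_nonneg fun a _ =>
          mul_nonneg (inv_nonneg.mpr (hdpos a).le) (sq_nonneg _)
      have hN0 : 0 ≤ (N *ᵥ x) ⬝ᵥ (N *ᵥ x) := by
        simp only [dotProduct]
        exact Finset.sum_nonneg fun t _ => mul_self_nonneg _
      have hge : 0 ≤ x ⬝ᵥ (Smat *ᵥ x) := by rw [hquad]; linarith
      rcases eq_or_lt_of_le hge with heq | hlt
      · exfalso
        rw [hquad] at heq
        obtain ⟨hs0, hNx0⟩ := (add_eq_zero_iff_of_nonneg hsum0 hN0).mp heq.symm
        have hNx : N *ᵥ x = 0 := dotProduct_self_eq_zero.mp hNx0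
        have hvx : ∀ a, v a ⬝ᵥ x = 0 := by
          intro a
          have h := (Finset.sum_eq_zero_iff_of_nonneg (fun a _ =>
            mul_nonneg (inv_nonneg.mpr (hdpos a).le) (sq_nonneg _))).mp hs0 a
            (Finset.mem_univ a)
          have h2 : (v a ⬝ᵥ x)^2 = 0 := by
            rcases mul_eq_zero.mp h with h3 | h3
            · exact absurd h3 (inv_ne_zero (hdne a))
            · exact h3
          exact pow_eq_zero_iff (by norm_num) |>.mp h2
        have hx0 : x = 0 := by
          rw [hNdef, sub_mulVec, one_mulVec, PH_sum_mulVec] at hNx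
          have h1 : ∀ a : Unspec S ⊕ Unspec S, ((dd a)⁻¹ • vecMulVec (w a) (v a)) *ᵥ x = 0 := by
            intro a
            rw [smul_mulVec, PH_vmv_mulVec, hvx a]
            simp
          rw [Finset.sum_congr rfl (fun a _ => h1 a)] at hNx
          simpa using hNx
        exact absurd hx0 hx
      · show 0 < star x ⬝ᵥ (Smat *ᵥ x)
        simpa using hlt
  have hSpsd := hSpd.posSemidef
  set T := hSpsd.sqrt with hTdef
  have hTT : T * T = Smat := hSpsd.sqrt_mul_self
  have hTherm : Tᴴ = T := hSpsd.posSemidef_sqrt.1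
  have hTt : Tᵀ = T := PH_herm_transpose hSpsd.posSemidef_sqrt.1
  have hTunit : IsUnit T.det := by
    have hd1 : T.det * T.det = Smat.det := by rw [← det_mul, hTT]
    have hd2 := hSpd.det_pos
    rw [isUnit_iff_ne_zero]
    intro h0
    rw [h0, mul_zero] at hd1
    rw [← hd1] at hd2
    exact lt_irrefl _ hd2
  have hTiT : T⁻¹ * T = 1 := nonsing_inv_mul T hTunit
  have hTTi : T * T⁻¹ = 1 := mul_nonsing_inv T hTunit
  have hTih : (T⁻¹)ᴴ = T⁻¹ := by rw [conjTranspose_nonsing_inv, hTherm]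
  set u : (Unspec S ⊕ Unspec S) → Fin d → ℝ := fun a => T *ᵥ w a with hudef
  have hTu : ∀ a, T *ᵥ u a = v a := by
    intro a
    have h : u a = T *ᵥ w a := rfl
    rw [h, mulVec_mulVec, hTT, hSw]
  have hTiu : ∀ a, T⁻¹ *ᵥ u a = w a := by
    intro a
    have h : u a = T *ᵥ w a := rfl
    rw [h, mulVec_mulVec, hTiT, one_mulVec]
  have huu : ∀ a b, u a ⬝ᵥ u b = if a = b then dd a else 0 := by
    intro a b
    have h1 : u a ⬝ᵥ u b = w a ⬝ᵥ (T *ᵥ u b) := by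
      have h : u a = T *ᵥ w a := rfl
      rw [h]
      exact PH_symm_dot hTt _ _
    rw [h1, hTu]
    rcases eq_or_ne a b with rfl | hab
    · rw [if_pos rfl, dotProduct_comm]
    · rw [if_neg hab, dotProduct_comm]
      exact horth b a (Ne.symm hab)
  set Bt : Fin n → Matrix (Fin d) (Fin d) ℝ := fun i => T * B (Sum.inl i) * T with hBtdef
  set Ct : Fin n → Matrix (Fin d) (Fin d) ℝ := fun j => T⁻¹ * C (Sum.inl j) * T⁻¹ with hCtdef
  have hBtpsd : ∀ i, (Bt i).PosSemidef := by
    intro i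
    have h := (hBpsd (Sum.inl i)).conjTranspose_mul_mul_same T
    rwa [hTherm] at h
  have hCtpsd : ∀ j, (Ct j).PosSemidef := by
    intro j
    have h := (hCpsd (Sum.inl j)).conjTranspose_mul_mul_same T⁻¹
    rwa [hTih] at h
  have hBtt : ∀ i, (Bt i)ᵀ = Bt i := fun i => PH_herm_transpose (hBtpsd i).1
  have hCtt : ∀ j, (Ct j)ᵀ = Ct j := fun j => PH_herm_transpose (hCtpsd j).1
  have htr_eq : ∀ i j, (Bt i * Ct j).trace = (B (Sum.inl i) * C (Sum.inl j)).trace := by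
    intro i j
    have hb : Bt i = T * B (Sum.inl i) * T := rfl
    have hc : Ct j = T⁻¹ * C (Sum.inl j) * T⁻¹ := rfl
    rw [hb, hc]
    have e1 : T * B (Sum.inl i) * T * (T⁻¹ * C (Sum.inl j) * T⁻¹)
        = T * (B (Sum.inl i) * (C (Sum.inl j) * T⁻¹)) := by
      calc T * B (Sum.inl i) * T * (T⁻¹ * C (Sum.inl j) * T⁻¹)
          = T * (B (Sum.inl i) * (T * (T⁻¹ * (C (Sum.inl j) * T⁻¹)))) := by
            simp only [Matrix.mul_assoc]
        _ = T * (B (Sum.inl i) * (C (Sum.inl j) * T⁻¹)) := by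
            rw [← Matrix.mul_assoc T T⁻¹, hTTi, Matrix.one_mul]
    rw [e1, trace_mul_comm]
    have e2 : B (Sum.inl i) * (C (Sum.inl j) * T⁻¹) * T = B (Sum.inl i) * C (Sum.inl j) := by
      calc B (Sum.inl i) * (C (Sum.inl j) * T⁻¹) * T
          = B (Sum.inl i) * (C (Sum.inl j) * (T⁻¹ * T)) := by simp only [Matrix.mul_assoc]
        _ = B (Sum.inl i) * C (Sum.inl j) := by rw [hTiT, Matrix.mul_one]
    rw [e2]
  have hrowv : ∀ i a, (prIdx a).1 ≠ i → Bt i *ᵥ u a = 0 := by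
    intro i a hne
    have h5 : B (Sum.inl i) *ᵥ v a = 0 := by
      have hv : v a = C (Sum.inr a) *ᵥ w a := rfl
      rw [hv, mulVec_mulVec, hrow0 i a hne, zero_mulVec]
    have hb : Bt i *ᵥ u a = T *ᵥ (B (Sum.inl i) *ᵥ (T *ᵥ u a)) := by
      show (T * B (Sum.inl i) * T) *ᵥ u a = _
      rw [Matrix.mul_assoc, ← mulVec_mulVec (u a) T (B (Sum.inl i) * T),
        ← mulVec_mulVec (u a) (B (Sum.inl i)) T]
    rw [hb, hTu, h5, mulVec_zero]
  have hcolv : ∀ j a, (prIdx a).2 ≠ j → Ct j *ᵥ u a = 0 := by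
    intro j a hne
    have h1 : C (Sum.inl j) * B (Sum.inr a) = 0 := by
      have h := congrArg Matrix.transpose (hcol0 j a hne)
      rwa [transpose_mul, hCt, hBt, transpose_zero] at h
    have h5 : C (Sum.inl j) *ᵥ w a = 0 := by
      have hw : w a = B (Sum.inr a) *ᵥ z a := rfl
      rw [hw, mulVec_mulVec, h1, zero_mulVec]
    have hc : Ct j *ᵥ u a = T⁻¹ *ᵥ (C (Sum.inl j) *ᵥ (T⁻¹ *ᵥ u a)) := by
      show (T⁻¹ * C (Sum.inl j) * T⁻¹) *ᵥ u a = _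
      rw [Matrix.mul_assoc, ← mulVec_mulVec (u a) T⁻¹ (C (Sum.inl j) * T⁻¹),
        ← mulVec_mulVec (u a) (C (Sum.inl j)) T⁻¹]
    rw [hc, hTiu, h5, mulVec_zero]
  set P : Matrix (Fin d) (Fin d) ℝ :=
    ∑ a : Unspec S ⊕ Unspec S, (dd a)⁻¹ • vecMulVec (u a) (u a) with hPdef
  set Q : Matrix (Fin d) (Fin d) ℝ := 1 - P with hQdef
  have hPP : P * P = P := by
    rw [hPdef, Matrix.sum_mul]
    refine Finset.sum_congr rfl fun a _ => ?_
    rw [Matrix.mul_sum]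
    have h1 : ∀ b : Unspec S ⊕ Unspec S,
        ((dd a)⁻¹ • vecMulVec (u a) (u a)) * ((dd b)⁻¹ • vecMulVec (u b) (u b))
        = if b = a then (dd a)⁻¹ • vecMulVec (u a) (u a) else 0 := by
      intro b
      rw [smul_mul_assoc, mul_smul_comm, PH_vmv_mul_vmv, huu]
      rcases eq_or_ne b a with rfl | hba
      · rw [if_pos rfl, if_pos rfl, smul_smul, smul_smul]
        congr 1
        field_simp
      · rw [if_neg (fun h => hba h.symm), if_neg hba, zero_smul, smul_zero, smul_zero]
    rw [Finset.sum_congr rfl (fun b _ => h1 b)]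
    simp
  have hPt : Pᵀ = P := by
    rw [hPdef, transpose_sum]
    refine Finset.sum_congr rfl fun a _ => ?_
    rw [transpose_smul, PH_vmv_transpose]
  have hQt : Qᵀ = Q := by rw [hQdef, transpose_sub, transpose_one, hPt]
  have hQ2 : Q * Q = Q := by
    have he : (1 - P) * (1 - P) = 1 - P - (P - P * P) := by noncomm_ring
    rw [hQdef, he, hPP, sub_self, sub_zero]
  have htrQ : Q.trace ≤ (3:ℝ) := by
    have htrP : P.trace = (Fintype.card (Unspec S ⊕ Unspec S) : ℝ) := by
      rw [hPdef, trace_sum]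
      have h1 : ∀ a : Unspec S ⊕ Unspec S, ((dd a)⁻¹ • vecMulVec (u a) (u a)).trace = 1 := by
        intro a
        rw [trace_smul, PH_trace_vmv, huu, if_pos rfl, smul_eq_mul, inv_mul_cancel₀ (hdne a)]
      rw [Finset.sum_congr rfl (fun a _ => h1 a)]
      simp
    rw [hQdef, trace_sub, trace_one, htrP, Fintype.card_fin]
    have hc2 : (Fintype.card (Unspec S ⊕ Unspec S) : ℝ)
        = 2 * (Fintype.card (Unspec S) : ℝ) := by
      rw [Fintype.card_sum]
      push_cast
      ring
    rw [hc2]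
    have hdr : (d:ℝ) ≤ 2 * (Fintype.card (Unspec S) : ℝ) + 3 := by
      exact_mod_cast hdle
    linarith
  have hQher : Q.IsHermitian := by
    show Qᴴ = Q
    rw [conjTranspose_eq_transpose_of_trivial]
    exact hQt
  obtain ⟨F, hFQ⟩ := PH_exists_factor (r := 3) Q hQher hQ2 (by exact_mod_cast htrQ)
  have hkey : ∀ i j, (∀ a : Unspec S ⊕ Unspec S, Bt i *ᵥ u a = 0 ∨ Ct j *ᵥ u a = 0) →
      (Bt i * Q * (Ct j * Q)).trace = (Bt i * Ct j).trace := by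
    intro i j h
    have hBP : Bt i * P = ∑ a : Unspec S ⊕ Unspec S,
        (dd a)⁻¹ • vecMulVec (Bt i *ᵥ u a) (u a) := by
      rw [hPdef, Matrix.mul_sum]
      exact Finset.sum_congr rfl fun a _ => by rw [mul_smul_comm, PH_mul_vmv]
    have hCP : Ct j * P = ∑ b : Unspec S ⊕ Unspec S,
        (dd b)⁻¹ • vecMulVec (Ct j *ᵥ u b) (u b) := by
      rw [hPdef, Matrix.mul_sum]
      exact Finset.sum_congr rfl fun b _ => by rw [mul_smul_comm, PH_mul_vmv]
    have t1 : (Bt i * (Ct j * P)).trace = 0 := by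
      rw [hCP, Matrix.mul_sum, trace_sum]
      refine Finset.sum_eq_zero fun b _ => ?_
      rw [mul_smul_comm, trace_smul, PH_mul_vmv, PH_trace_vmv]
      rcases h b with hb | hc
      · rw [PH_symm_dot (hBtt i), hb, dotProduct_zero, smul_zero]
      · rw [hc, mulVec_zero, zero_dotProduct, smul_zero]
    have t2 : (Bt i * P * Ct j).trace = 0 := by
      rw [hBP, Matrix.sum_mul, trace_sum]
      refine Finset.sum_eq_zero fun a _ => ?_
      rw [smul_mul_assoc, trace_smul, PH_vmv_mul, hCtt, PH_trace_vmv]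
      rcases h a with hb | hc
      · rw [hb, zero_dotProduct, smul_zero]
      · rw [hc, dotProduct_zero, smul_zero]
    have t3 : (Bt i * P * (Ct j * P)).trace = 0 := by
      rw [hBP, hCP, Matrix.sum_mul, trace_sum]
      refine Finset.sum_eq_zero fun a _ => ?_
      rw [smul_mul_assoc, trace_smul, Matrix.mul_sum, trace_sum]
      have hz : ∀ b ∈ (Finset.univ : Finset (Unspec S ⊕ Unspec S)),
          (vecMulVec (Bt i *ᵥ u a) (u a) *
            ((dd b)⁻¹ • vecMulVec (Ct j *ᵥ u b) (u b))).trace = 0 := by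
        intro b _
        rw [mul_smul_comm, trace_smul, PH_vmv_mul_vmv, trace_smul, PH_trace_vmv]
        rcases h b with hb | hc
        · rw [PH_symm_dot (hBtt i), hb, dotProduct_zero]
          simp
        · rw [hc, dotProduct_zero]
          simp
      rw [Finset.sum_eq_zero hz, smul_zero]
    have e0 : Bt i * Q * (Ct j * Q)
        = Bt i * Ct j - Bt i * (Ct j * P) - (Bt i * P * Ct j - Bt i * P * (Ct j * P)) := by
      rw [hQdef]
      noncomm_ring
    rw [e0, trace_sub, trace_sub, trace_sub, t1, t2, t3]
    ring
  set Cmat : Matrix (Fin n) (Fin n) ℝ :=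
    Matrix.of fun i j => ((Fᴴ * Bt i * F) * (Fᴴ * Ct j * F)).trace with hCmatdef
  have hcyc : ∀ i j, Cmat i j = (Bt i * Q * (Ct j * Q)).trace := by
    intro i j
    have h0 : Cmat i j = ((Fᴴ * Bt i * F) * (Fᴴ * Ct j * F)).trace := rfl
    rw [h0, ← hFQ]
    have h1 : (Fᴴ * Bt i * F) * (Fᴴ * Ct j * F)
        = Fᴴ * (Bt i * (F * (Fᴴ * (Ct j * F)))) := by simp only [Matrix.mul_assoc]
    rw [h1, trace_mul_comm]
    congr 1
    simp only [Matrix.mul_assoc]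
  refine ⟨Cmat, ?_, ?_, ?_⟩
  · intro i j a hij
    have hcond : ∀ a2 : Unspec S ⊕ Unspec S, Bt i *ᵥ u a2 = 0 ∨ Ct j *ᵥ u a2 = 0 := by
      intro a2
      rcases eq_or_ne (prIdx a2).1 i with h1 | h1
      · right
        refine hcolv j a2 ?_
        intro h2
        have hnone : (S (prIdx a2).1 (prIdx a2).2).isNone := by
          rcases a2 with e | e
          · exact e.property
          · exact e.property
        rw [h1, h2, hij] at hnone
        simp at hnone
      · left
        exact hrowv i a2 h1
    rw [hcyc i j, hkey i j hcond, htr_eq i j]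
    have h3 := hfact (Sum.inl i) (Sum.inl j)
    rw [← h3]
    simp only [GadgetM, Matrix.of_apply, hij, Option.getD_some]
  · intro i j
    have h4 : Cmat i j = ((Fᴴ * Bt i * F) * (Fᴴ * Ct j * F)).trace := rfl
    rw [h4]
    exact PH_trace_mul_psd_nonneg ((hBtpsd i).conjTranspose_mul_mul_same F)
      ((hCtpsd j).conjTranspose_mul_mul_same F)
  · show PsdRank Cmat ≤ 3
    have hw3 : ∃ (B' : Fin n → Matrix (Fin 3) (Fin 3) ℝ)
        (C' : Fin n → Matrix (Fin 3) (Fin 3) ℝ),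
        (∀ i, (B' i).PosSemidef) ∧ (∀ j, (C' j).PosSemidef) ∧
        ∀ i j, Cmat i j = ((B' i) * (C' j)).trace := by
      refine ⟨fun i => Fᴴ * Bt i * F, fun j => Fᴴ * Ct j * F,
        fun i => ?_, fun j => ?_, fun i j => ?_⟩
      · exact (hBtpsd i).conjTranspose_mul_mul_same F
      · exact (hCtpsd j).conjTranspose_mul_mul_same F
      · rfl
    have hPR2 : PsdRank Cmat = sInf {k : ℕ | ∃ (B' : Fin n → Matrix (Fin k) (Fin k) ℝ)
        (C' : Fin n → Matrix (Fin k) (Fin k) ℝ),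
        (∀ i, (B' i).PosSemidef) ∧ (∀ j, (C' j).PosSemidef) ∧
        ∀ i j, Cmat i j = ((B' i) * (C' j)).trace} := rfl
    rw [hPR2]
    exact Nat.sInf_le hw3
end
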